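/- arXiv:1707.03288 — 2 statements merged into one kernel-verified Lean document; each statement's English description precedes it below -/
import Mathlib

section
/- Let I be a dyadic interval, e ∈ ℤ, and n ∈ ℕ with n ≥ 1. Then the number of dyadic intervals J with |I| = 2^e |J| and n ≤ rdist(I,J) < n+1 is at most a constant times 2^{max(e,0)} (and at least of that order), where rdist(I,J) = diam(I∪J)/max(|I|,|J|). -/
/-- Lower endpoint of the dyadic interval `2^{-j}[k, k+1]`. -/
noncomputable def dyLow (j k : ℤ) : ℝ := (k : ℝ) * (2 : ℝ) ^ (-j)

/-- Upper endpoint of the dyadic interval `2^{-j}[k, k+1]`. -/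
noncomputable def dyHigh (j k : ℤ) : ℝ := ((k : ℝ) + 1) * (2 : ℝ) ^ (-j)

/-- Relative distance between the dyadic intervals `2^{-j}[k,k+1]` and `2^{-j'}[k',k'+1]`:
`rdist(I,J) = diam(I∪J)/max(|I|,|J|)`. -/
noncomputable def dyRdist (j k j' k' : ℤ) : ℝ :=
  (max (dyHigh j k) (dyHigh j' k') - min (dyLow j k) (dyLow j' k')) /
    max ((2 : ℝ) ^ (-j)) ((2 : ℝ) ^ (-j'))

private lemma helper1 (c M p q r s : ℝ) (hc : 0 < c) (hM : 1 ≤ M) :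
    (max (p * c) (q * (c / M)) - min (r * c) (s * (c / M))) / max c (c / M)
      = (max (M * p) q - min (M * r) s) / M := by
  have hM0 : 0 < M := lt_of_lt_of_le one_pos hM
  have hcm : 0 < c / M := div_pos hc hM0
  have h1 : max c (c / M) = c := max_eq_left (div_le_self hc.le hM)
  have h2 : p * c = (M * p) * (c / M) := by field_simp
  have h3 : r * c = (M * r) * (c / M) := by field_simp
  rw [h1, h2, h3, ← max_mul_of_nonneg _ _ hcm.le, ← min_mul_of_nonneg _ _ hcm.le, ← sub_mul]
  rw [mul_div_assoc]
  have : c / M / c = 1 / M := by field_simp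
  rw [this, mul_one_div]

private lemma helper2 (c M p q r s : ℝ) (hc : 0 < c) (hM : 1 ≤ M) :
    (max (q * (c / M)) (p * c) - min (s * (c / M)) (r * c)) / max (c / M) c
      = (max q (M * p) - min s (M * r)) / M := by
  rw [max_comm (q * (c/M)), min_comm (s * (c/M)), max_comm (c/M) c,
    helper1 c M p q r s hc hM, max_comm, min_comm]

private lemma castpow (d : ℕ) : (((2 : ℤ) ^ d : ℤ) : ℝ) = (2 : ℝ) ^ (d : ℤ) := by
  push_cast
  rw [← zpow_natCast]

private lemma rdist_pos (j k e k' : ℤ) (he : 0 ≤ e) :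
    dyRdist j k (j + e) k' =
      (((max ((2 ^ e.toNat : ℤ) * (k + 1)) (k' + 1) - min ((2 ^ e.toNat : ℤ) * k) k' : ℤ)) : ℝ)
        / ((2 ^ e.toNat : ℤ) : ℝ) := by
  have hMe : ((2 ^ e.toNat : ℤ) : ℝ) = (2 : ℝ) ^ e := by
    rw [castpow, Int.toNat_of_nonneg he]
  have hc : (0:ℝ) < (2:ℝ) ^ (-j) := zpow_pos two_pos _
  have hM : (1:ℝ) ≤ (2:ℝ) ^ e := one_le_zpow₀ one_le_two he
  have hkey : (2:ℝ) ^ (-(j+e)) = (2:ℝ) ^ (-j) / (2:ℝ) ^ e := by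
    simp [neg_add, zpow_add₀ (two_ne_zero : (2:ℝ) ≠ 0), zpow_neg, div_eq_mul_inv, mul_comm]
  have h2 : (2:ℝ) ^ (e.toNat) = (2:ℝ) ^ e := by
    rw [← zpow_natCast, Int.toNat_of_nonneg he]
  unfold dyRdist dyHigh dyLow
  rw [hMe, hkey]
  push_cast
  rw [h2]
  exact helper1 _ _ _ _ _ _ hc hM

private lemma rdist_neg (j k e k' : ℤ) (he : e < 0) :
    dyRdist j k (j + e) k' =
      (((max (k + 1) ((2 ^ (-e).toNat : ℤ) * (k' + 1)) - min k ((2 ^ (-e).toNat : ℤ) * k' : ℤ)) : ℤ) : ℝ)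
        / ((2 ^ (-e).toNat : ℤ) : ℝ) := by
  have hMe : ((2 ^ (-e).toNat : ℤ) : ℝ) = (2 : ℝ) ^ (-e) := by
    rw [castpow, Int.toNat_of_nonneg (by omega)]
  have hc : (0:ℝ) < (2:ℝ) ^ (-(j+e)) := zpow_pos two_pos _
  have hM : (1:ℝ) ≤ (2:ℝ) ^ (-e) := one_le_zpow₀ one_le_two (by omega)
  have hkey : (2:ℝ) ^ (-j) = (2:ℝ) ^ (-(j+e)) / (2:ℝ) ^ (-e) := by
    rw [eq_div_iff (zpow_ne_zero _ (two_ne_zero)), ← zpow_add₀ (two_ne_zero : (2:ℝ) ≠ 0)]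
    congr 1
    ring
  have h2 : (2:ℝ) ^ ((-e).toNat) = (2:ℝ) ^ (-e) := by
    rw [← zpow_natCast, Int.toNat_of_nonneg (by omega)]
  unfold dyRdist dyHigh dyLow
  rw [hMe, hkey]
  push_cast
  rw [h2]
  exact helper2 _ _ _ _ _ _ hc hM

private lemma cond_iff (M g : ℤ) (n : ℕ) (hM : 0 < M) :
    ((n : ℝ) ≤ (g : ℝ) / (M : ℝ) ∧ (g : ℝ) / (M : ℝ) < (n : ℝ) + 1) ↔
      (M * (n : ℤ) ≤ g ∧ g < M * (n : ℤ) + M) := by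
  have hMR : (0:ℝ) < (M:ℝ) := by exact_mod_cast hM
  rw [le_div_iff₀ hMR, div_lt_iff₀ hMR,
    show (n:ℝ) * M = ((M * (n:ℤ) : ℤ) : ℝ) by push_cast; ring,
    show ((n:ℝ) + 1) * M = ((M * (n:ℤ) + M : ℤ) : ℝ) by push_cast; ring,
    Int.cast_le, Int.cast_lt]

private lemma subsing (M a : ℤ) (hM : 0 < M) :
    Set.Subsingleton {k' : ℤ | a ≤ M * k' ∧ M * k' < a + M} := by
  have key : ∀ u v : ℤ, u < v → a ≤ M * u → a ≤ M * v → M * v < a + M → False := by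
    intro u v huv h1 h3 h4
    have h5 : M * (u + 1) ≤ M * v := mul_le_mul_of_nonneg_left (by omega) hM.le
    rw [mul_add, mul_one] at h5
    linarith
  rintro x ⟨hx1, hx2⟩ y ⟨hy1, hy2⟩
  by_contra hne
  rcases lt_or_gt_of_ne hne with h | h
  · exact key x y h hx1 hy1 hy2
  · exact key y x h hy1 hx1 hx2

private lemma count_pos (M A B : ℤ) (S : Set ℤ) (hM : 1 ≤ M) (hB : M ≤ B)
    (hS : S = {k' : ℤ | B ≤ max (A + M) (k' + 1) - min A k' ∧
        max (A + M) (k' + 1) - min A k' < B + M}) :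
    S.Finite ∧ M.toNat ≤ S.ncard ∧ S.ncard ≤ 3 * M.toNat := by
  have hsub1 : Set.Icc (A + B - 1) (A + B + M - 2) ⊆ S := by
    intro x hx
    simp only [Set.mem_Icc] at hx
    rw [hS]
    simp only [Set.mem_setOf_eq]
    omega
  have hsub2 : S ⊆ Set.Ioc (A - B) (A - B + M) ∪ Set.Icc A (A + M - 1) ∪
      Set.Icc (A + B - 1) (A + B + M - 2) := by
    intro x hx
    rw [hS] at hx
    simp only [Set.mem_setOf_eq] at hx
    simp only [Set.mem_union, Set.mem_Ioc, Set.mem_Icc]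
    omega
  have hfinU : (Set.Ioc (A - B) (A - B + M) ∪ Set.Icc A (A + M - 1) ∪
      Set.Icc (A + B - 1) (A + B + M - 2)).Finite :=
    ((Set.finite_Ioc _ _).union (Set.finite_Icc _ _)).union (Set.finite_Icc _ _)
  have hfin : S.Finite := hfinU.subset hsub2
  have c1 : (Set.Ioc (A - B) (A - B + M)).ncard = M.toNat := by
    rw [← Finset.coe_Ioc, Set.ncard_coe_finset, Int.card_Ioc]
    congr 1; ring
  have c2 : (Set.Icc A (A + M - 1)).ncard = M.toNat := by
    rw [← Finset.coe_Icc, Set.ncard_coe_finset, Int.card_Icc]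
    congr 1; ring
  have c3 : (Set.Icc (A + B - 1) (A + B + M - 2)).ncard = M.toNat := by
    rw [← Finset.coe_Icc, Set.ncard_coe_finset, Int.card_Icc]
    congr 1; ring
  refine ⟨hfin, ?_, ?_⟩
  · have h := Set.ncard_le_ncard hsub1 hfin
    rwa [c3] at h
  · calc S.ncard ≤ (Set.Ioc (A - B) (A - B + M) ∪ Set.Icc A (A + M - 1) ∪
        Set.Icc (A + B - 1) (A + B + M - 2)).ncard := Set.ncard_le_ncard hsub2 hfinU
    _ ≤ (Set.Ioc (A - B) (A - B + M) ∪ Set.Icc A (A + M - 1)).ncard +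
        (Set.Icc (A + B - 1) (A + B + M - 2)).ncard := Set.ncard_union_le _ _
    _ ≤ (Set.Ioc (A - B) (A - B + M)).ncard + (Set.Icc A (A + M - 1)).ncard +
        (Set.Icc (A + B - 1) (A + B + M - 2)).ncard :=
      Nat.add_le_add_right (Set.ncard_union_le _ _) _
    _ = 3 * M.toNat := by rw [c1, c2, c3]; ring

private lemma count_neg (M k B : ℤ) (S : Set ℤ) (hM : 2 ≤ M) (hB : M ≤ B)
    (hS : S = {k' : ℤ | B ≤ max (k + 1) (M * (k' + 1)) - min k (M * k') ∧
        max (k + 1) (M * (k' + 1)) - min k (M * k') < B + M}) :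
    S.Finite ∧ 1 ≤ S.ncard ∧ S.ncard ≤ 3 := by
  have hM0 : (0:ℤ) < M := by omega
  have hsub : S ⊆ {k' : ℤ | k + B - M ≤ M * k' ∧ M * k' < k + B - M + M} ∪
      {k' : ℤ | k + 2 - B - M ≤ M * k' ∧ M * k' < k + 2 - B - M + M} ∪
      {k' : ℤ | k - M + 1 ≤ M * k' ∧ M * k' < k - M + 1 + M} := by
    intro x hx
    rw [hS] at hx
    simp only [Set.mem_setOf_eq] at hx
    rw [show M * (x + 1) = M * x + M from by ring] at hx
    simp only [Set.mem_union, Set.mem_setOf_eq]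
    generalize hX : M * x = X at hx ⊢
    omega
  have hs1 := subsing M (k + B - M) hM0
  have hs2 := subsing M (k + 2 - B - M) hM0
  have hs3 := subsing M (k - M + 1) hM0
  have hfinU := ((hs1.finite.union hs2.finite).union hs3.finite)
  have hfin : S.Finite := hfinU.subset hsub
  refine ⟨hfin, ?_, ?_⟩
  · obtain ⟨q, r, hqr, hr0, hrM⟩ : ∃ q r : ℤ, k + B - 1 = M * q + r ∧ 0 ≤ r ∧ r < M :=
      ⟨(k + B - 1) / M, (k + B - 1) % M, (Int.mul_ediv_add_emod (k + B - 1) M).symm,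
        Int.emod_nonneg _ hM0.ne', Int.emod_lt_of_pos _ hM0⟩
    have hq : q ∈ S := by
      rw [hS]
      simp only [Set.mem_setOf_eq]
      rw [show M * (q + 1) = M * q + M from by ring]
      generalize hX : M * q = X at hqr ⊢
      omega
    exact (Set.ncard_pos hfin).mpr ⟨q, hq⟩
  · calc S.ncard ≤ ({k' : ℤ | k + B - M ≤ M * k' ∧ M * k' < k + B - M + M} ∪
        {k' : ℤ | k + 2 - B - M ≤ M * k' ∧ M * k' < k + 2 - B - M + M} ∪
        {k' : ℤ | k - M + 1 ≤ M * k' ∧ M * k' < k - M + 1 + M}).ncard :=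
      Set.ncard_le_ncard hsub hfinU
    _ ≤ ({k' : ℤ | k + B - M ≤ M * k' ∧ M * k' < k + B - M + M} ∪
        {k' : ℤ | k + 2 - B - M ≤ M * k' ∧ M * k' < k + 2 - B - M + M}).ncard +
        ({k' : ℤ | k - M + 1 ≤ M * k' ∧ M * k' < k - M + 1 + M}).ncard :=
      Set.ncard_union_le _ _
    _ ≤ ({k' : ℤ | k + B - M ≤ M * k' ∧ M * k' < k + B - M + M}).ncard +
        ({k' : ℤ | k + 2 - B - M ≤ M * k' ∧ M * k' < k + 2 - B - M + M}).ncard +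
        ({k' : ℤ | k - M + 1 ≤ M * k' ∧ M * k' < k - M + 1 + M}).ncard :=
      Nat.add_le_add_right (Set.ncard_union_le _ _) _
    _ ≤ 1 + 1 + 1 := by
      gcongr <;> exact (Set.ncard_le_one_iff (by first
        | exact hs1.finite | exact hs2.finite | exact hs3.finite)).mpr
        (fun ha hb => by first | exact hs1 ha hb | exact hs2 ha hb | exact hs3 ha hb)
    _ = 3 := by norm_num

/-- For a dyadic interval `I` (of scale `j`), `e ∈ ℤ` and `n ≥ 1`, the number of dyadic
intervals `J` with `|I| = 2^e |J|` and `n ≤ rdist(I,J) < n+1` is comparable to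
`2^{max(e,0)}`, with absolute constants. -/
theorem stmt3 :
    ∃ C : ℝ, 1 ≤ C ∧ ∀ (j k e : ℤ) (n : ℕ), 1 ≤ n →
      ({k' : ℤ | (n : ℝ) ≤ dyRdist j k (j + e) k' ∧ dyRdist j k (j + e) k' < (n : ℝ) + 1}).Finite ∧
      (2 : ℝ) ^ (max e 0) / C ≤
        (({k' : ℤ | (n : ℝ) ≤ dyRdist j k (j + e) k' ∧
            dyRdist j k (j + e) k' < (n : ℝ) + 1}).ncard : ℝ) ∧
      (({k' : ℤ | (n : ℝ) ≤ dyRdist j k (j + e) k' ∧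
            dyRdist j k (j + e) k' < (n : ℝ) + 1}).ncard : ℝ) ≤ C * (2 : ℝ) ^ (max e 0) := by
  refine ⟨4, by norm_num, ?_⟩
  intro j k e n hn
  rcases le_or_gt 0 e with he | he
  · -- e ≥ 0
    set M : ℤ := 2 ^ e.toNat with hMdef
    have hM0 : (0:ℤ) < M := pow_pos (by norm_num) _
    have hB : M ≤ M * (n:ℤ) := le_mul_of_one_le_right hM0.le (by exact_mod_cast hn)
    have hSeq : {k' : ℤ | (n : ℝ) ≤ dyRdist j k (j + e) k' ∧ dyRdist j k (j + e) k' < (n : ℝ) + 1}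
        = {k' : ℤ | M * (n:ℤ) ≤ max (M * k + M) (k' + 1) - min (M * k) k' ∧
            max (M * k + M) (k' + 1) - min (M * k) k' < M * (n:ℤ) + M} := by
      ext k'
      simp only [Set.mem_setOf_eq]
      rw [rdist_pos j k e k' he, ← hMdef, cond_iff _ _ _ hM0,
        show M * (k + 1) = M * k + M from by ring]
    obtain ⟨hfin, hlo, hhi⟩ := count_pos M (M * k) (M * (n:ℤ)) _ (by omega) hB hSeq
    have hMR : ((M:ℤ):ℝ) = (2:ℝ) ^ (max e 0) := by
      rw [max_eq_left he, hMdef, castpow, Int.toNat_of_nonneg he]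
    have hMRpos : (0:ℝ) < (M:ℝ) := by exact_mod_cast hM0
    have hcast : ((M.toNat : ℕ) : ℝ) = (M : ℝ) := by
      rw [← Int.cast_natCast, Int.toNat_of_nonneg hM0.le]
    refine ⟨hfin, ?_, ?_⟩
    · rw [← hMR]
      have h1 : ((M.toNat : ℕ) : ℝ) ≤
          (({k' : ℤ | (n : ℝ) ≤ dyRdist j k (j + e) k' ∧
            dyRdist j k (j + e) k' < (n : ℝ) + 1}).ncard : ℝ) := by exact_mod_cast hlo
      rw [hcast] at h1
      linarith
    · rw [← hMR]
      have h1 : (({k' : ℤ | (n : ℝ) ≤ dyRdist j k (j + e) k' ∧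
            dyRdist j k (j + e) k' < (n : ℝ) + 1}).ncard : ℝ) ≤ ((3 * M.toNat : ℕ) : ℝ) := by
        exact_mod_cast hhi
      have h2 : ((3 * M.toNat : ℕ) : ℝ) = 3 * (M:ℝ) := by push_cast [hcast]; ring
      linarith
  · -- e < 0
    set M : ℤ := 2 ^ (-e).toNat with hMdef
    have hM2 : (2:ℤ) ≤ M := by
      obtain ⟨t, ht⟩ : ∃ t, (-e).toNat = t + 1 := ⟨(-e).toNat - 1, by omega⟩
      rw [hMdef, ht, pow_succ]
      have : (0:ℤ) < 2 ^ t := pow_pos (by norm_num) _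
      nlinarith
    have hM0 : (0:ℤ) < M := by omega
    have hB : M ≤ M * (n:ℤ) := le_mul_of_one_le_right hM0.le (by exact_mod_cast hn)
    have hSeq : {k' : ℤ | (n : ℝ) ≤ dyRdist j k (j + e) k' ∧ dyRdist j k (j + e) k' < (n : ℝ) + 1}
        = {k' : ℤ | M * (n:ℤ) ≤ max (k + 1) (M * (k' + 1)) - min k (M * k') ∧
            max (k + 1) (M * (k' + 1)) - min k (M * k') < M * (n:ℤ) + M} := by
      ext k'
      simp only [Set.mem_setOf_eq]
      rw [rdist_neg j k e k' he, ← hMdef, cond_iff _ _ _ hM0]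
    obtain ⟨hfin, hlo, hhi⟩ := count_neg M k (M * (n:ℤ)) _ hM2 hB hSeq
    have hMR : (2:ℝ) ^ (max e 0) = 1 := by
      rw [max_eq_right he.le, zpow_zero]
    refine ⟨hfin, ?_, ?_⟩
    · rw [hMR]
      have h1 : (1:ℝ) ≤ (({k' : ℤ | (n : ℝ) ≤ dyRdist j k (j + e) k' ∧
            dyRdist j k (j + e) k' < (n : ℝ) + 1}).ncard : ℝ) := by exact_mod_cast hlo
      linarith
    · rw [hMR]
      have h1 : (({k' : ℤ | (n : ℝ) ≤ dyRdist j k (j + e) k' ∧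
            dyRdist j k (j + e) k' < (n : ℝ) + 1}).ncard : ℝ) ≤ (3:ℝ) := by exact_mod_cast hhi
      linarith
end

section
/- Let A : ℝ → ℝ be absolutely continuous with A' ∈ L^∞(ℝ) ∩ BMO(ℝ). Then for all x ≠ t, the kernel K_n(x,t) = (A(x) - A(t) - 2A(x - ¼(x-t)) + 2A(x - ¾(x-t)))^n / (x-t)^{n+1} satisfies |K_n(x,t)| ≲ 2^n ‖A'‖_{BMO}^n |x-t|^{-1}, with an absolute implicit constant. -/
open intervalIntegral

open MeasureTheory in
lemma stmt13_key (g : ℝ → ℝ) (B : ℝ)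
    (hg : ∀ a b : ℝ, IntervalIntegrable g volume a b)
    (hB : ∀ a b : ℝ, a < b →
      (b - a)⁻¹ * ∫ s in a..b, |g s - (b - a)⁻¹ * ∫ z in a..b, g z| ≤ B)
    (t x : ℝ) (htx : t < x) :
    |(∫ s in t..x, g s) - 2 * ∫ s in (x - 3 * (x - t) / 4)..(x - (x - t) / 4), g s|
      ≤ B * (x - t) := by
  set q := x - 3 * (x - t) / 4 with hqdef
  set p := x - (x - t) / 4 with hpdef
  set c := (x - t)⁻¹ * ∫ z in t..x, g z with hcdef
  have htq : t ≤ q := by rw [hqdef]; linarith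
  have hqp : q ≤ p := by rw [hqdef, hpdef]; linarith
  have hpx : p ≤ x := by rw [hpdef]; linarith
  have hgc : ∀ a b : ℝ, IntervalIntegrable (fun s => g s - c) volume a b :=
    fun a b => (hg a b).sub intervalIntegrable_const
  have hint : ∀ a b : ℝ, (∫ s in a..b, (g s - c)) = (∫ s in a..b, g s) - (b - a) * c := by
    intro a b
    rw [intervalIntegral.integral_sub (hg a b) intervalIntegrable_const,
      intervalIntegral.integral_const, smul_eq_mul]
  have s1 := intervalIntegral.integral_add_adjacent_intervals (hg t q) (hg q x)
  have s2 := intervalIntegral.integral_add_adjacent_intervals (hg q p) (hg p x)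
  -- identity
  have hid : (∫ s in t..x, g s) - 2 * ∫ s in q..p, g s
      = (∫ s in t..q, (g s - c)) - (∫ s in q..p, (g s - c)) + (∫ s in p..x, (g s - c)) := by
    rw [hint, hint, hint, ← s1, ← s2, hqdef, hpdef]
    ring
  have habs : ∀ a b : ℝ, a ≤ b → |∫ s in a..b, (g s - c)| ≤ ∫ s in a..b, |g s - c| := by
    intro a b hab
    simpa [Real.norm_eq_abs] using
      intervalIntegral.norm_integral_le_integral_norm (f := fun s => g s - c) hab
  have hgca : ∀ a b : ℝ, IntervalIntegrable (fun s => |g s - c|) volume a b :=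
    fun a b => (hgc a b).abs
  have t1 := intervalIntegral.integral_add_adjacent_intervals (hgca t q) (hgca q x)
  have t2 := intervalIntegral.integral_add_adjacent_intervals (hgca q p) (hgca p x)
  have hnn : ∀ a b : ℝ, a ≤ b → 0 ≤ ∫ s in a..b, |g s - c| := by
    intro a b hab
    exact intervalIntegral.integral_nonneg hab (fun s _ => abs_nonneg _)
  have hBbound : ∫ s in t..x, |g s - c| ≤ B * (x - t) := by
    have h1 := hB t x htx
    have hx : (0:ℝ) < x - t := by linarith
    rw [hcdef]
    calc ∫ s in t..x, |g s - (x - t)⁻¹ * ∫ z in t..x, g z|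
        = (x - t) * ((x - t)⁻¹ * ∫ s in t..x, |g s - (x - t)⁻¹ * ∫ z in t..x, g z|) := by
          rw [← mul_assoc, mul_inv_cancel₀ hx.ne', one_mul]
      _ ≤ (x - t) * B := by
          exact mul_le_mul_of_nonneg_left h1 hx.le
      _ = B * (x - t) := by ring
  calc |(∫ s in t..x, g s) - 2 * ∫ s in q..p, g s|
      ≤ |∫ s in t..q, (g s - c)| + |∫ s in q..p, (g s - c)| + |∫ s in p..x, (g s - c)| := by
        rw [hid]
        exact (abs_add_le _ _).trans (by gcongr; exact (abs_sub _ _))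
    _ ≤ (∫ s in t..q, |g s - c|) + (∫ s in q..p, |g s - c|) + (∫ s in p..x, |g s - c|) := by
        gcongr
        exacts [habs t q htq, habs q p hqp, habs p x hpx]
    _ = ∫ s in t..x, |g s - c| := by rw [← t1, ← t2]; ring
    _ ≤ B * (x - t) := hBbound

/-- If `A` is absolutely continuous with derivative `A' = g ∈ L^∞ ∩ BMO` (BMO seminorm
at most `B`), then for `x ≠ t`, the kernel
`K_n(x,t) = (A(x)-A(t)-2A(x-¼(x-t))+2A(x-¾(x-t)))^n/(x-t)^{n+1}` satisfies
`|K_n(x,t)| ≤ C 2^n B^n |x-t|⁻¹` for an absolute constant `C`. -/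
theorem stmt13 :
    ∃ C : ℝ, 0 < C ∧
      ∀ (A g : ℝ → ℝ) (B : ℝ) (n : ℕ), 1 ≤ n →
        (∀ a b : ℝ, IntervalIntegrable g MeasureTheory.volume a b) →
        (∀ a b : ℝ, A b - A a = ∫ s in a..b, g s) →
        (∀ a b : ℝ, a < b →
          (b - a)⁻¹ * ∫ s in a..b, |g s - (b - a)⁻¹ * ∫ z in a..b, g z| ≤ B) →
        ∀ x t : ℝ, x ≠ t →
          |(A x - A t - 2 * A (x - (x - t) / 4) + 2 * A (x - 3 * (x - t) / 4)) ^ n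
              / (x - t) ^ (n + 1)|
            ≤ C * 2 ^ n * B ^ n / |x - t| := by
  refine ⟨1, one_pos, ?_⟩
  intro A g B n hn hg hA hB x t hxt
  have hB0 : 0 ≤ B := by
    have h1 := hB 0 1 one_pos
    have h2 : 0 ≤ (1 - (0:ℝ))⁻¹ * ∫ s in (0:ℝ)..1, |g s - (1 - (0:ℝ))⁻¹ * ∫ z in (0:ℝ)..1, g z| := by
      apply mul_nonneg (by norm_num)
      exact intervalIntegral.integral_nonneg (by norm_num) (fun s _ => abs_nonneg _)
    linarith
  set q := x - 3 * (x - t) / 4 with hqdef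
  set p := x - (x - t) / 4 with hpdef
  have hnum : A x - A t - 2 * A p + 2 * A q
      = (∫ s in t..x, g s) - 2 * ∫ s in q..p, g s := by
    have h1 := hA t x
    have h2 := hA q p
    linarith
  have hkey : |A x - A t - 2 * A p + 2 * A q| ≤ B * |x - t| := by
    rcases lt_or_gt_of_ne hxt with hlt | hgt
    · -- x < t
      have h := stmt13_key g B hg hB x t hlt
      have e1 : t - 3 * (t - x) / 4 = p := by rw [hpdef]; ring
      have e2 : t - (t - x) / 4 = q := by rw [hqdef]; ring
      rw [e1, e2] at h
      have e3 : (∫ s in x..t, g s) - 2 * ∫ s in p..q, g s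
          = -((∫ s in t..x, g s) - 2 * ∫ s in q..p, g s) := by
        rw [intervalIntegral.integral_symm t x, intervalIntegral.integral_symm q p]
        ring
      rw [e3, abs_neg] at h
      rw [hnum]
      calc |(∫ s in t..x, g s) - 2 * ∫ s in q..p, g s| ≤ B * (t - x) := h
        _ = B * |x - t| := by rw [abs_sub_comm, abs_of_pos (by linarith)]
    · -- t < x
      have h := stmt13_key g B hg hB t x hgt
      rw [hnum]
      calc |(∫ s in t..x, g s) - 2 * ∫ s in q..p, g s| ≤ B * (x - t) := h
        _ = B * |x - t| := by rw [abs_of_pos (by linarith)]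
  have hh : (0 : ℝ) < |x - t| := abs_pos.mpr (sub_ne_zero.mpr hxt)
  rw [abs_div, abs_pow, abs_pow]
  calc |A x - A t - 2 * A p + 2 * A q| ^ n / |x - t| ^ (n + 1)
      ≤ (B * |x - t|) ^ n / |x - t| ^ (n + 1) := by
        gcongr
    _ = B ^ n / |x - t| := by
        rw [mul_pow, pow_succ]
        field_simp
    _ ≤ 1 * 2 ^ n * B ^ n / |x - t| := by
        gcongr 
        nlinarith [pow_nonneg hB0 n, one_le_pow₀ (by norm_num : (1:ℝ) ≤ 2) (n := n)]
end
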